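/- Let d ≥ 2, 0 < s < 1, p ≥ 1. The function Φ(t) = ω_{d-2} ∫_{-1}^{1} (1-r²)^{(d-3)/2}(1-2tr+t²)^{-(d+sp)/2} dr is (strictly) increasing on [0,1). -/

import Mathlib

open MeasureTheory Set

noncomputable section

/-- The angular kernel `Φ_{d,s,p}` for `d ≥ 2`. -/
def Phi (d : ℕ) (s p t : ℝ) : ℝ :=
  (2 * Real.pi ^ (((d : ℝ) - 1) / 2) / Real.Gamma (((d : ℝ) - 1) / 2)) *
    ∫ r in (-1 : ℝ)..1,
      (1 - r ^ 2) ^ (((d : ℝ) - 3) / 2) * (1 - 2 * t * r + t ^ 2) ^ (-((d : ℝ) + s * p) / 2)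

namespace PhiAux

open Real intervalIntegral

/-- the weight `(1-r^2)^((d-3)/2)` -/
def fw (d : ℕ) (r : ℝ) : ℝ := (1 - r ^ 2) ^ (((d : ℝ) - 3) / 2)

/-- the exponent -/
def cc (d : ℕ) (s p : ℝ) : ℝ := -((d : ℝ) + s * p) / 2

def uu (t r : ℝ) : ℝ := 1 - 2 * t * r + t ^ 2

lemma uu_lower {T t r : ℝ} (ht : |t| ≤ T) (hT : T < 1) (hr : |r| ≤ 1) :
    (1 - T) ^ 2 ≤ uu t r := by
  have h1 : t * r ≤ |t| := by
    calc t * r ≤ |t * r| := le_abs_self _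
    _ = |t| * |r| := abs_mul _ _
    _ ≤ |t| * 1 := by gcongr
    _ = |t| := mul_one _
  have h2 : 0 ≤ T := (abs_nonneg t).trans ht
  have h3 := sq_abs t
  unfold uu
  nlinarith [mul_nonneg (sub_nonneg.2 ht) (by nlinarith : (0:ℝ) ≤ 2 - T - |t|)]

lemma uu_pos {t r : ℝ} (ht : |t| < 1) (hr : |r| ≤ 1) : 0 < uu t r :=
  lt_of_lt_of_le (pow_pos (by linarith [abs_nonneg t]) 2) (uu_lower le_rfl ht hr)


lemma fw_nonneg (d : ℕ) {r : ℝ} (hr1 : -1 ≤ r) (hr2 : r ≤ 1) : 0 ≤ fw d r :=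
  Real.rpow_nonneg (by nlinarith) _

lemma fw_pos (d : ℕ) {r : ℝ} (hr : r ∈ Ioo (-1:ℝ) 1) : 0 < fw d r :=
  Real.rpow_pos_of_pos (by obtain ⟨h1, h2⟩ := hr; nlinarith) _

lemma measurable_fw (d : ℕ) : Measurable (fw d) := by unfold fw; fun_prop

lemma intervalIntegrable_fw {d : ℕ} (hd : 2 ≤ d) :
    IntervalIntegrable (fw d) volume (-1) 1 := by
  have hdR : (2:ℝ) ≤ (d:ℝ) := by exact_mod_cast hd
  set α := ((d:ℝ) - 3) / 2 with hα
  have hα1 : (-1:ℝ) < α := by rw [hα]; linarith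
  set C : ℝ := max ((2:ℝ) ^ α) 1 with hC
  have hCp : ∀ x : ℝ, 1 ≤ x → x ≤ 2 → x ^ α ≤ C := by
    intro x h1 h2
    rcases le_or_gt 0 α with h | h
    · exact le_trans (Real.rpow_le_rpow (by linarith) h2 h) (le_max_left _ _)
    · refine le_trans ?_ (le_max_right _ _)
      calc x ^ α ≤ 1 ^ α := Real.rpow_le_rpow_of_nonpos (by linarith) h1 h.le
      _ = 1 := Real.one_rpow _
  have hright : IntervalIntegrable (fw d) volume 0 1 := by
    have h1 : IntervalIntegrable (fun x : ℝ => (1 - x) ^ α) volume 0 1 := by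
      have := (intervalIntegrable_rpow' (a := 0) (b := 1) hα1).comp_sub_left 1
      simpa using this.symm
    refine (h1.const_mul C).mono_fun' ((measurable_fw d).aestronglyMeasurable) ?_
    rw [Filter.EventuallyLE, ae_restrict_iff' measurableSet_uIoc]
    refine Filter.Eventually.of_forall fun r hr => ?_
    rw [Set.uIoc_of_le (by norm_num : (0:ℝ) ≤ 1)] at hr
    obtain ⟨h1r, h2r⟩ := hr
    have hfw : fw d r = (1 - r) ^ α * (1 + r) ^ α := by
      rw [fw, ← Real.mul_rpow (by linarith) (by linarith), hα]
      ring_nf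
    rw [Real.norm_eq_abs, abs_of_nonneg (fw_nonneg d (by linarith) h2r), hfw]
    calc (1 - r) ^ α * (1 + r) ^ α ≤ (1 - r) ^ α * C := by
          gcongr
          · exact hCp _ (by linarith) (by linarith)
    _ = C * (1 - r) ^ α := mul_comm _ _
  have hleft : IntervalIntegrable (fw d) volume (-1) 0 := by
    have h1 : IntervalIntegrable (fun x : ℝ => (1 + x) ^ α) volume (-1) 0 := by
      have := (intervalIntegrable_rpow' (a := 0) (b := 1) hα1).comp_sub_right (-1)
      simp only [zero_add, sub_neg_eq_add] at this
      convert this using 2 with x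
      · ring_nf
      · norm_num
    refine (h1.const_mul C).mono_fun' ((measurable_fw d).aestronglyMeasurable) ?_
    rw [Filter.EventuallyLE, ae_restrict_iff' measurableSet_uIoc]
    refine Filter.Eventually.of_forall fun r hr => ?_
    rw [Set.uIoc_of_le (by norm_num : (-1:ℝ) ≤ 0)] at hr
    obtain ⟨h1r, h2r⟩ := hr
    have hfw : fw d r = (1 - r) ^ α * (1 + r) ^ α := by
      rw [fw, ← Real.mul_rpow (by linarith) (by linarith), hα]
      ring_nf
    rw [Real.norm_eq_abs, abs_of_nonneg (fw_nonneg d h1r.le (by linarith)), hfw]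
    have e1 : (1 - r) ^ α ≤ C := hCp _ (by linarith) (by linarith)
    have e2 : 0 ≤ (1 + r) ^ α := Real.rpow_nonneg (by linarith) _
    exact mul_le_mul_of_nonneg_right e1 e2
  exact hleft.trans hright

/-- main integrability criterion -/
lemma II_of_le_fw {d : ℕ} (hd : 2 ≤ d) {φ : ℝ → ℝ} {C : ℝ}
    (hm : AEStronglyMeasurable φ (volume.restrict (Set.uIoc (-1:ℝ) 1)))
    (h : ∀ r ∈ Ioc (-1:ℝ) 1, ‖φ r‖ ≤ C * fw d r) :
    IntervalIntegrable φ volume (-1) 1 := by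
  refine ((intervalIntegrable_fw hd).const_mul C).mono_fun' hm ?_
  rw [Filter.EventuallyLE, ae_restrict_iff' measurableSet_uIoc]
  refine Filter.Eventually.of_forall fun r hr => ?_
  rw [Set.uIoc_of_le (by norm_num : (-1:ℝ) ≤ 1)] at hr
  exact h r hr


def g0 (d : ℕ) (s p t r : ℝ) : ℝ := fw d r * uu t r ^ cc d s p
def g1 (d : ℕ) (s p t r : ℝ) : ℝ :=
  fw d r * (cc d s p * uu t r ^ (cc d s p - 1) * (2 * t - 2 * r))
def g2 (d : ℕ) (s p t r : ℝ) : ℝ :=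
  fw d r * (cc d s p * (cc d s p - 1) * uu t r ^ (cc d s p - 2) * (2 * t - 2 * r) ^ 2
    + 2 * cc d s p * uu t r ^ (cc d s p - 1))

def FF (d : ℕ) (s p t : ℝ) : ℝ := ∫ r in (-1:ℝ)..1, g0 d s p t r
def F1 (d : ℕ) (s p t : ℝ) : ℝ := ∫ r in (-1:ℝ)..1, g1 d s p t r
def F2 (d : ℕ) (s p t : ℝ) : ℝ := ∫ r in (-1:ℝ)..1, g2 d s p t r
def GG (d : ℕ) (s p t : ℝ) : ℝ := ∫ r in (-1:ℝ)..1, fw d r * uu t r ^ (cc d s p - 1)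

/-- derivative of `uu` in `t` -/
lemma hasDerivAt_uu (r t : ℝ) : HasDerivAt (fun t => uu t r) (2 * t - 2 * r) t := by
  have h1 : HasDerivAt (fun x : ℝ => 1 - 2 * x * r + x ^ 2) (2 * t - 2 * r) t := by
    have h2 := ((hasDerivAt_id t).const_mul 2).mul_const r
    have h3 := hasDerivAt_pow 2 t
    refine (((hasDerivAt_const t (1:ℝ)).sub h2).add h3).congr_deriv ?_
    push_cast
    ring
  exact h1

lemma hasDerivAt_g0 (d : ℕ) (s p : ℝ) {t : ℝ} (r : ℝ) (hu : uu t r ≠ 0) :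
    HasDerivAt (fun t => g0 d s p t r) (g1 d s p t r) t := by
  have h := ((hasDerivAt_uu r t).rpow_const (p := cc d s p) (Or.inl hu)).const_mul (fw d r)
  refine h.congr_deriv ?_
  unfold g1
  ring

lemma hasDerivAt_g1 (d : ℕ) (s p : ℝ) {t : ℝ} (r : ℝ) (hu : uu t r ≠ 0) :
    HasDerivAt (fun t => g1 d s p t r) (g2 d s p t r) t := by
  have h1 := (hasDerivAt_uu r t).rpow_const (p := cc d s p - 1) (Or.inl hu)
  have h2 : HasDerivAt (fun t : ℝ => 2 * t - 2 * r) 2 t := by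
    simpa using ((hasDerivAt_id t).const_mul 2).sub_const (2 * r)
  have h3 := ((h1.const_mul (cc d s p)).mul h2).const_mul (fw d r)
  refine h3.congr_deriv ?_
  unfold g2
  have : cc d s p - 1 - 1 = cc d s p - 2 := by ring
  rw [this]
  ring

lemma meas_g0 (d : ℕ) (s p t : ℝ) : Measurable (fun r => g0 d s p t r) := by
  unfold g0 uu
  exact (measurable_fw d).mul (by fun_prop)

lemma meas_g1 (d : ℕ) (s p t : ℝ) : Measurable (fun r => g1 d s p t r) := by
  unfold g1 uu
  exact (measurable_fw d).mul (by fun_prop)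

lemma meas_g2 (d : ℕ) (s p t : ℝ) : Measurable (fun r => g2 d s p t r) := by
  unfold g2 uu
  exact (measurable_fw d).mul (by fun_prop)

lemma meas_gG (d : ℕ) (s p t : ℝ) : Measurable (fun r => fw d r * uu t r ^ (cc d s p - 1)) := by
  unfold uu
  exact (measurable_fw d).mul (by fun_prop)

/-- uniform bound: for `|t| ≤ T < 1`, `r ∈ Ioc (-1) 1`, any exponent `b ≤ 0`:
`uu t r ^ b ≤ ((1-T)^2) ^ b`. -/
lemma uu_rpow_le {T t r b : ℝ} (ht : |t| ≤ T) (hT : T < 1) (hr1 : -1 ≤ r) (hr2 : r ≤ 1)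
    (hb : b ≤ 0) : uu t r ^ b ≤ ((1 - T) ^ 2) ^ b := by
  have hT0 : 0 ≤ T := (abs_nonneg t).trans ht
  have hm : (0:ℝ) < (1 - T) ^ 2 := pow_pos (by linarith) 2
  exact Real.rpow_le_rpow_of_nonpos hm (uu_lower ht hT (abs_le.2 ⟨hr1, hr2⟩)) hb


section deriv

variable {d : ℕ} {s p : ℝ}

lemma ball_abs {t₀ x : ℝ} (ht₀ : |t₀| < 1) (hx : x ∈ Metric.ball t₀ ((1 - |t₀|)/2)) :
    |x| ≤ (1 + |t₀|)/2 := by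
  have h := abs_sub_abs_le_abs_sub x t₀
  have h2 := mem_ball_iff_norm.1 hx
  rw [Real.norm_eq_abs] at h2
  linarith

lemma T_lt_one {t₀ : ℝ} (ht₀ : |t₀| < 1) : (1 + |t₀|)/2 < 1 := by linarith

lemma hasDerivAt_FF (hd : 2 ≤ d) (hcc : cc d s p < 0) {t₀ : ℝ} (ht₀ : |t₀| < 1) :
    HasDerivAt (FF d s p) (F1 d s p t₀) t₀ := by
  set T : ℝ := (1 + |t₀|)/2 with hTdef
  set ε : ℝ := (1 - |t₀|)/2 with hεdef
  have hε0 : 0 < ε := by rw [hεdef]; linarith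
  have hT1 : T < 1 := T_lt_one ht₀
  have hT0 : 0 ≤ T := by rw [hTdef]; positivity
  set m : ℝ := (1 - T)^2 with hmdef
  have hm0 : 0 < m := pow_pos (by linarith) 2
  set C1 : ℝ := |cc d s p| * m ^ (cc d s p - 1) * 4 with hC1
  have key := intervalIntegral.hasDerivAt_integral_of_dominated_loc_of_deriv_le
      (F := fun x r => g0 d s p x r) (F' := fun x r => g1 d s p x r)
      (bound := fun r => C1 * fw d r) (a := -1) (b := 1) (μ := volume) (x₀ := t₀) (Metric.ball_mem_nhds t₀ hε0)
      (Filter.Eventually.of_forall fun x => (meas_g0 d s p x).aestronglyMeasurable)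
      ?_ ((meas_g1 d s p t₀).aestronglyMeasurable) ?_
      ((intervalIntegrable_fw hd).const_mul C1) ?_
  · exact key.2
  · -- integrability of g0 t₀
    refine II_of_le_fw hd ((meas_g0 d s p t₀).aestronglyMeasurable) (C := m ^ cc d s p) ?_
    intro r hr
    have hfw := fw_nonneg d hr.1.le hr.2
    have hu0 : (0:ℝ) < uu t₀ r := uu_pos ht₀ (abs_le.2 ⟨hr.1.le, hr.2⟩)
    have hu1 : uu t₀ r ^ cc d s p ≤ m ^ cc d s p := by
      rw [hmdef]
      exact uu_rpow_le (by rw [hTdef]; linarith) hT1 hr.1.le hr.2 hcc.le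
    simp only [g0]
    rw [Real.norm_eq_abs, abs_mul, abs_of_nonneg hfw,
      abs_of_nonneg (Real.rpow_nonneg hu0.le _)]
    calc fw d r * uu t₀ r ^ cc d s p ≤ fw d r * m ^ cc d s p :=
          mul_le_mul_of_nonneg_left hu1 hfw
    _ = m ^ cc d s p * fw d r := mul_comm _ _
  · -- bound for g1
    refine Filter.Eventually.of_forall fun r hr => ?_
    rw [Set.uIoc_of_le (by norm_num : (-1:ℝ) ≤ 1)] at hr
    intro x hx
    have hxT : |x| ≤ T := ball_abs ht₀ hx
    have hx1 : |x| < 1 := lt_of_le_of_lt hxT hT1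
    have hfw := fw_nonneg d hr.1.le hr.2
    have hu0 : (0:ℝ) < uu x r := uu_pos hx1 (abs_le.2 ⟨hr.1.le, hr.2⟩)
    have hu1 : uu x r ^ (cc d s p - 1) ≤ m ^ (cc d s p - 1) := by
      rw [hmdef]
      exact uu_rpow_le hxT hT1 hr.1.le hr.2 (by linarith)
    have habs : |2 * x - 2 * r| ≤ 4 := by
      have hx2' := abs_le.1 hxT
      rw [abs_le]
      constructor <;> nlinarith [hr.1.le, hr.2]
    have hun : (0:ℝ) ≤ uu x r ^ (cc d s p - 1) := Real.rpow_nonneg hu0.le _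
    simp only [g1]
    rw [Real.norm_eq_abs, abs_mul, abs_of_nonneg hfw, abs_mul, abs_mul,
      abs_of_nonneg hun]
    have hstep : |cc d s p| * uu x r ^ (cc d s p - 1) * |2 * x - 2 * r|
        ≤ |cc d s p| * m ^ (cc d s p - 1) * 4 := by
      apply mul_le_mul (mul_le_mul_of_nonneg_left hu1 (abs_nonneg _)) habs (abs_nonneg _)
      positivity
    calc fw d r * (|cc d s p| * uu x r ^ (cc d s p - 1) * |2 * x - 2 * r|)
        ≤ fw d r * (|cc d s p| * m ^ (cc d s p - 1) * 4) :=
          mul_le_mul_of_nonneg_left hstep hfw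
    _ = C1 * fw d r := by rw [hC1]; ring
  · -- differentiability
    refine Filter.Eventually.of_forall fun r hr => ?_
    rw [Set.uIoc_of_le (by norm_num : (-1:ℝ) ≤ 1)] at hr
    intro x hx
    have hx1 : |x| < 1 := lt_of_le_of_lt (ball_abs ht₀ hx) hT1
    exact hasDerivAt_g0 d s p r (uu_pos hx1 (abs_le.2 ⟨hr.1.le, hr.2⟩)).ne'

lemma hasDerivAt_F1 (hd : 2 ≤ d) (hcc : cc d s p < 0) {t₀ : ℝ} (ht₀ : |t₀| < 1) :
    HasDerivAt (F1 d s p) (F2 d s p t₀) t₀ := by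
  set T : ℝ := (1 + |t₀|)/2 with hTdef
  set ε : ℝ := (1 - |t₀|)/2 with hεdef
  have hε0 : 0 < ε := by rw [hεdef]; linarith
  have hT1 : T < 1 := T_lt_one ht₀
  have hT0 : 0 ≤ T := by rw [hTdef]; positivity
  set m : ℝ := (1 - T)^2 with hmdef
  have hm0 : 0 < m := pow_pos (by linarith) 2
  set C2 : ℝ := |cc d s p * (cc d s p - 1)| * m ^ (cc d s p - 2) * 16
      + |2 * cc d s p| * m ^ (cc d s p - 1) with hC2
  have key := intervalIntegral.hasDerivAt_integral_of_dominated_loc_of_deriv_le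
      (F := fun x r => g1 d s p x r) (F' := fun x r => g2 d s p x r)
      (bound := fun r => C2 * fw d r) (a := -1) (b := 1) (μ := volume) (x₀ := t₀) (Metric.ball_mem_nhds t₀ hε0)
      (Filter.Eventually.of_forall fun x => (meas_g1 d s p x).aestronglyMeasurable)
      ?_ ((meas_g2 d s p t₀).aestronglyMeasurable) ?_
      ((intervalIntegrable_fw hd).const_mul C2) ?_
  · exact key.2
  · -- integrability of g1 t₀
    refine II_of_le_fw hd ((meas_g1 d s p t₀).aestronglyMeasurable)
      (C := |cc d s p| * m ^ (cc d s p - 1) * 4) ?_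
    intro r hr
    have hfw := fw_nonneg d hr.1.le hr.2
    have hu0 : (0:ℝ) < uu t₀ r := uu_pos ht₀ (abs_le.2 ⟨hr.1.le, hr.2⟩)
    have hu1 : uu t₀ r ^ (cc d s p - 1) ≤ m ^ (cc d s p - 1) := by
      rw [hmdef]
      exact uu_rpow_le (by rw [hTdef]; linarith) hT1 hr.1.le hr.2 (by linarith)
    have habs : |2 * t₀ - 2 * r| ≤ 4 := by
      have hx2' := abs_le.1 ht₀.le
      rw [abs_le]
      constructor <;> nlinarith [hr.1.le, hr.2]
    have hun : (0:ℝ) ≤ uu t₀ r ^ (cc d s p - 1) := Real.rpow_nonneg hu0.le _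
    simp only [g1]
    rw [Real.norm_eq_abs, abs_mul, abs_of_nonneg hfw, abs_mul, abs_mul,
      abs_of_nonneg hun]
    have hstep : |cc d s p| * uu t₀ r ^ (cc d s p - 1) * |2 * t₀ - 2 * r|
        ≤ |cc d s p| * m ^ (cc d s p - 1) * 4 := by
      apply mul_le_mul (mul_le_mul_of_nonneg_left hu1 (abs_nonneg _)) habs (abs_nonneg _)
      positivity
    calc fw d r * (|cc d s p| * uu t₀ r ^ (cc d s p - 1) * |2 * t₀ - 2 * r|)
        ≤ fw d r * (|cc d s p| * m ^ (cc d s p - 1) * 4) :=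
          mul_le_mul_of_nonneg_left hstep hfw
    _ = |cc d s p| * m ^ (cc d s p - 1) * 4 * fw d r := mul_comm _ _
  · -- bound for g2
    refine Filter.Eventually.of_forall fun r hr => ?_
    rw [Set.uIoc_of_le (by norm_num : (-1:ℝ) ≤ 1)] at hr
    intro x hx
    have hxT : |x| ≤ T := ball_abs ht₀ hx
    have hx1 : |x| < 1 := lt_of_le_of_lt hxT hT1
    have hfw := fw_nonneg d hr.1.le hr.2
    have hu0 : (0:ℝ) < uu x r := uu_pos hx1 (abs_le.2 ⟨hr.1.le, hr.2⟩)
    have hu1 : uu x r ^ (cc d s p - 1) ≤ m ^ (cc d s p - 1) := by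
      rw [hmdef]; exact uu_rpow_le hxT hT1 hr.1.le hr.2 (by linarith)
    have hu2 : uu x r ^ (cc d s p - 2) ≤ m ^ (cc d s p - 2) := by
      rw [hmdef]; exact uu_rpow_le hxT hT1 hr.1.le hr.2 (by linarith)
    have hun1 : (0:ℝ) ≤ uu x r ^ (cc d s p - 1) := Real.rpow_nonneg hu0.le _
    have hun2 : (0:ℝ) ≤ uu x r ^ (cc d s p - 2) := Real.rpow_nonneg hu0.le _
    have habs : |2 * x - 2 * r| ≤ 4 := by
      have hx2' := abs_le.1 hxT
      rw [abs_le]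
      constructor <;> nlinarith [hr.1.le, hr.2]
    have hsq : (2 * x - 2 * r) ^ 2 ≤ 16 := by
      have h4 := abs_le.1 habs
      nlinarith
    have hsq0 : (0:ℝ) ≤ (2 * x - 2 * r) ^ 2 := sq_nonneg _
    simp only [g2]
    rw [Real.norm_eq_abs, abs_mul, abs_of_nonneg hfw]
    refine le_trans (mul_le_mul_of_nonneg_left (abs_add_le _ _) hfw) ?_
    have h1 : |cc d s p * (cc d s p - 1) * uu x r ^ (cc d s p - 2) * (2 * x - 2 * r) ^ 2|
        ≤ |cc d s p * (cc d s p - 1)| * m ^ (cc d s p - 2) * 16 := by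
      rw [abs_mul, abs_mul, abs_of_nonneg hun2, abs_of_nonneg hsq0]
      apply mul_le_mul (mul_le_mul_of_nonneg_left hu2 (abs_nonneg _)) hsq hsq0
      positivity
    have h2 : |2 * cc d s p * uu x r ^ (cc d s p - 1)|
        ≤ |2 * cc d s p| * m ^ (cc d s p - 1) := by
      rw [abs_mul, abs_of_nonneg hun1]
      exact mul_le_mul_of_nonneg_left hu1 (abs_nonneg _)
    calc fw d r * (|cc d s p * (cc d s p - 1) * uu x r ^ (cc d s p - 2) * (2 * x - 2 * r) ^ 2|
          + |2 * cc d s p * uu x r ^ (cc d s p - 1)|)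
        ≤ fw d r * C2 := by
          refine mul_le_mul_of_nonneg_left ?_ hfw
          rw [hC2]
          exact add_le_add h1 h2
    _ = C2 * fw d r := mul_comm _ _
  · -- differentiability
    refine Filter.Eventually.of_forall fun r hr => ?_
    rw [Set.uIoc_of_le (by norm_num : (-1:ℝ) ≤ 1)] at hr
    intro x hx
    have hx1 : |x| < 1 := lt_of_le_of_lt (ball_abs ht₀ hx) hT1
    exact hasDerivAt_g1 d s p r (uu_pos hx1 (abs_le.2 ⟨hr.1.le, hr.2⟩)).ne'

end deriv

section ode

variable {d : ℕ} {s p : ℝ}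

def KK (d : ℕ) (s p : ℝ) : ℝ := (-2 * cc d s p) * (-2 * cc d s p + 2 - (d : ℝ))

def PP (d : ℕ) (s p t r : ℝ) : ℝ :=
  (1 - r ^ 2) ^ (((d : ℝ) - 1) / 2) * (-2 * cc d s p * t * uu t r ^ (cc d s p - 1))

def Pd (d : ℕ) (s p t r : ℝ) : ℝ :=
  ((d : ℝ) - 1) / 2 * (1 - r ^ 2) ^ (((d : ℝ) - 1) / 2 - 1) * (-2 * r)
      * (-2 * cc d s p * t * uu t r ^ (cc d s p - 1))
    + (1 - r ^ 2) ^ (((d : ℝ) - 1) / 2)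
      * (-2 * cc d s p * t * ((cc d s p - 1) * uu t r ^ (cc d s p - 2) * (-2 * t)))

lemma hasDerivAt_base (r : ℝ) : HasDerivAt (fun r : ℝ => 1 - r ^ 2) (-2 * r) r := by
  have h := (hasDerivAt_pow 2 r).const_sub 1
  refine h.congr_deriv ?_
  push_cast
  ring

lemma hasDerivAt_uu_r (t r : ℝ) : HasDerivAt (fun r => uu t r) (-2 * t) r := by
  have h1 : HasDerivAt (fun r : ℝ => 2 * t * r) (2 * t) r := by
    simpa using (hasDerivAt_id r).const_mul (2 * t)
  have h := (h1.const_sub 1).add_const (t ^ 2)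
  refine h.congr_deriv ?_
  ring

lemma hasDerivAt_PP (hd : 2 ≤ d) {t : ℝ} (ht : |t| < 1) {r : ℝ} (hr : r ∈ Ioo (-1:ℝ) 1) :
    HasDerivAt (fun r => PP d s p t r) (Pd d s p t r) r := by
  have hx : (0:ℝ) < 1 - r ^ 2 := by obtain ⟨h1, h2⟩ := hr; nlinarith
  have hu : (0:ℝ) < uu t r := uu_pos ht (abs_le.2 ⟨hr.1.le, hr.2.le⟩)
  have h1 := (hasDerivAt_base r).rpow_const (p := ((d:ℝ) - 1) / 2) (Or.inl hx.ne')
  have h2 := ((hasDerivAt_uu_r t r).rpow_const (p := cc d s p - 1) (Or.inl hu.ne')).const_mul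
      (-2 * cc d s p * t)
  have h := h1.mul h2
  refine h.congr_deriv ?_
  simp only [Pd]
  have he : cc d s p - 1 - 1 = cc d s p - 2 := by ring
  rw [he]
  ring

lemma PP_cont (hd : 2 ≤ d) {t : ℝ} (ht : |t| < 1) :
    ContinuousOn (fun r => PP d s p t r) (Icc (-1:ℝ) 1) := by
  intro r hr
  have hu : (0:ℝ) < uu t r := uu_pos ht (abs_le.2 ⟨hr.1, hr.2⟩)
  have hdR : (2:ℝ) ≤ (d:ℝ) := by exact_mod_cast hd
  apply ContinuousWithinAt.mul
  · apply ContinuousAt.continuousWithinAt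
    apply ContinuousAt.rpow_const (by fun_prop)
    right
    have hdR : (2:ℝ) ≤ (d:ℝ) := by exact_mod_cast hd
    linarith
  · apply ContinuousAt.continuousWithinAt
    apply ContinuousAt.mul continuousAt_const
    apply ContinuousAt.rpow_const ?_ (Or.inl hu.ne')
    unfold uu; fun_prop

lemma PP_endpoints (hd : 2 ≤ d) (t : ℝ) :
    PP d s p t 1 = 0 ∧ PP d s p t (-1) = 0 := by
  have hdR : (2:ℝ) ≤ (d:ℝ) := by exact_mod_cast hd
  have hq : ((d:ℝ) - 1) / 2 ≠ 0 := ne_of_gt (by linarith)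
  constructor
  · simp only [PP]
    rw [show (1:ℝ) - (1:ℝ)^2 = 0 by norm_num, Real.zero_rpow hq, zero_mul]
  · simp only [PP]
    rw [show (1:ℝ) - (-1:ℝ)^2 = 0 by norm_num, Real.zero_rpow hq, zero_mul]

/-- `(1-r^2)^((d-1)/2) = fw d r * (1-r^2)` for `|r| ≤ 1`. -/
lemma pow_q_eq (hd : 2 ≤ d) {r : ℝ} (hr : 0 ≤ 1 - r ^ 2) :
    (1 - r ^ 2) ^ (((d : ℝ) - 1) / 2) = fw d r * (1 - r ^ 2) := by
  have hdR : (2:ℝ) ≤ (d:ℝ) := by exact_mod_cast hd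
  rcases eq_or_lt_of_le hr with h | h
  · rw [← h, Real.zero_rpow (ne_of_gt (by linarith)), mul_zero]
  · rw [show ((d:ℝ) - 1) / 2 = ((d:ℝ) - 3) / 2 + 1 by ring, Real.rpow_add_one h.ne', fw]

lemma fw_eq_qm1 (d : ℕ) (r : ℝ) :
    (1 - r ^ 2) ^ (((d : ℝ) - 1) / 2 - 1) = fw d r := by
  rw [show ((d:ℝ) - 1) / 2 - 1 = ((d:ℝ) - 3) / 2 by ring, fw]

lemma intervalIntegrable_Pd (hd : 2 ≤ d) (hcc : cc d s p < 0) {t : ℝ} (ht : |t| < 1) :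
    IntervalIntegrable (fun r => Pd d s p t r) volume (-1) 1 := by
  set m : ℝ := (1 - |t|) ^ 2 with hm
  have hm0 : 0 < m := pow_pos (by linarith [abs_nonneg t]) 2
  set A : ℝ := |2 * ((d:ℝ) - 1) * cc d s p| * m ^ (cc d s p - 1) with hA
  set B : ℝ := |4 * cc d s p * (cc d s p - 1)| * m ^ (cc d s p - 2) with hB
  have hmeas : Measurable fun r => Pd d s p t r := by
    unfold Pd uu
    fun_prop
  refine II_of_le_fw hd hmeas.aestronglyMeasurable (C := A + B) ?_
  intro r hr
  have hx : (0:ℝ) ≤ 1 - r ^ 2 := by obtain ⟨h1, h2⟩ := hr; nlinarith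
  have hfw := fw_nonneg d hr.1.le hr.2
  have hrabs : |r| ≤ 1 := abs_le.2 ⟨hr.1.le, hr.2⟩
  have htabs : |t| ≤ 1 := ht.le
  have hu : (0:ℝ) < uu t r := uu_pos ht hrabs
  have hu1 : uu t r ^ (cc d s p - 1) ≤ m ^ (cc d s p - 1) := by
    rw [hm]; exact uu_rpow_le le_rfl ht hr.1.le hr.2 (by linarith)
  have hu2 : uu t r ^ (cc d s p - 2) ≤ m ^ (cc d s p - 2) := by
    rw [hm]; exact uu_rpow_le le_rfl ht hr.1.le hr.2 (by linarith)
  have hun1 : (0:ℝ) ≤ uu t r ^ (cc d s p - 1) := Real.rpow_nonneg hu.le _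
  have hun2 : (0:ℝ) ≤ uu t r ^ (cc d s p - 2) := Real.rpow_nonneg hu.le _
  have hdR : (2:ℝ) ≤ (d:ℝ) := by exact_mod_cast hd
  -- rewrite Pd as fw * Q
  have hPd : Pd d s p t r = fw d r *
      ((2 * ((d:ℝ) - 1) * cc d s p) * (r * t) * uu t r ^ (cc d s p - 1)
        + (4 * cc d s p * (cc d s p - 1)) * ((1 - r ^ 2) * t ^ 2)
            * uu t r ^ (cc d s p - 2)) := by
    simp only [Pd]
    rw [fw_eq_qm1, pow_q_eq hd hx]
    ring
  rw [hPd, Real.norm_eq_abs, abs_mul, abs_of_nonneg hfw]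
  have hrt : |r * t| ≤ 1 := by
    rw [abs_mul]
    exact mul_le_one₀ hrabs (abs_nonneg t) htabs
  have hxt : |(1 - r ^ 2) * t ^ 2| ≤ 1 := by
    rw [abs_mul, abs_of_nonneg hx, abs_of_nonneg (sq_nonneg t)]
    have h2 : t ^ 2 ≤ 1 := by nlinarith [abs_le.1 htabs]
    have h3 : 1 - r ^ 2 ≤ 1 := by nlinarith [abs_le.1 hrabs]
    exact mul_le_one₀ h3 (sq_nonneg t) h2
  have h1 : |(2 * ((d:ℝ) - 1) * cc d s p) * (r * t) * uu t r ^ (cc d s p - 1)| ≤ A := by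
    rw [abs_mul, abs_mul, abs_of_nonneg hun1, hA]
    calc |2 * ((d:ℝ) - 1) * cc d s p| * |r * t| * uu t r ^ (cc d s p - 1)
        ≤ |2 * ((d:ℝ) - 1) * cc d s p| * 1 * m ^ (cc d s p - 1) := by gcongr
    _ = |2 * ((d:ℝ) - 1) * cc d s p| * m ^ (cc d s p - 1) := by ring
  have h2 : |(4 * cc d s p * (cc d s p - 1)) * ((1 - r ^ 2) * t ^ 2)
      * uu t r ^ (cc d s p - 2)| ≤ B := by
    rw [abs_mul, abs_mul, abs_of_nonneg hun2, hB]
    calc |4 * cc d s p * (cc d s p - 1)| * |(1 - r ^ 2) * t ^ 2| * uu t r ^ (cc d s p - 2)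
        ≤ |4 * cc d s p * (cc d s p - 1)| * 1 * m ^ (cc d s p - 2) := by gcongr
    _ = |4 * cc d s p * (cc d s p - 1)| * m ^ (cc d s p - 2) := by ring
  calc fw d r * |(2 * ((d:ℝ) - 1) * cc d s p) * (r * t) * uu t r ^ (cc d s p - 1)
        + (4 * cc d s p * (cc d s p - 1)) * ((1 - r ^ 2) * t ^ 2)
            * uu t r ^ (cc d s p - 2)|
      ≤ fw d r * (A + B) := by
        refine mul_le_mul_of_nonneg_left ?_ hfw
        exact le_trans (abs_add_le _ _) (add_le_add h1 h2)
  _ = (A + B) * fw d r := mul_comm _ _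

lemma integral_Pd (hd : 2 ≤ d) (hcc : cc d s p < 0) {t : ℝ} (ht : |t| < 1) :
    ∫ r in (-1:ℝ)..1, Pd d s p t r = 0 := by
  have h := intervalIntegral.integral_eq_sub_of_hasDerivAt_of_le (by norm_num : (-1:ℝ) ≤ 1)
      (PP_cont hd ht) (fun r hr => hasDerivAt_PP hd ht hr) (intervalIntegrable_Pd hd hcc ht)
  rw [h, (PP_endpoints hd t).1, (PP_endpoints hd t).2, sub_zero]

/-- the pointwise identity -/
lemma pointwise_identity (hd : 2 ≤ d) {t r : ℝ} (ht0 : 0 < t) (ht1 : t < 1)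
    (hr : r ∈ Ioo (-1:ℝ) 1) :
    g2 d s p t r + (((d:ℝ) - 1) / t) * g1 d s p t r
      = KK d s p * (fw d r * uu t r ^ (cc d s p - 1)) - (1 / t ^ 2) * Pd d s p t r := by
  have hx : (0:ℝ) < 1 - r ^ 2 := by obtain ⟨h1, h2⟩ := hr; nlinarith
  have ht : |t| < 1 := abs_lt.2 ⟨by linarith, ht1⟩
  have hu : (0:ℝ) < uu t r := uu_pos ht (abs_le.2 ⟨hr.1.le, hr.2.le⟩)
  have e1 : uu t r ^ (cc d s p - 1) = uu t r ^ (cc d s p - 2) * uu t r := by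
    rw [show cc d s p - 1 = cc d s p - 2 + 1 by ring, Real.rpow_add_one hu.ne']
  simp only [g1, g2, Pd, KK]
  rw [fw_eq_qm1, pow_q_eq hd hx.le, e1]
  simp only [uu]
  field_simp
  ring

/-- the ODE satisfied by the integrals -/
lemma ode_identity (hd : 2 ≤ d) (hcc : cc d s p < 0) {t : ℝ} (ht0 : 0 < t) (ht1 : t < 1) :
    F2 d s p t + (((d:ℝ) - 1) / t) * F1 d s p t = KK d s p * GG d s p t := by
  have ht : |t| < 1 := abs_lt.2 ⟨by linarith, ht1⟩
  -- integrability of all pieces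
  set T : ℝ := |t| with hT
  set m : ℝ := (1 - |t|) ^ 2 with hm
  have hm0 : 0 < m := pow_pos (by linarith [abs_nonneg t]) 2
  have hbase : ∀ (b : ℝ), b ≤ 0 → ∀ r ∈ Ioc (-1:ℝ) 1,
      ‖fw d r * uu t r ^ b‖ ≤ m ^ b * fw d r := by
    intro b hb r hrm
    have hfw := fw_nonneg d hrm.1.le hrm.2
    have hu : (0:ℝ) < uu t r := uu_pos ht (abs_le.2 ⟨hrm.1.le, hrm.2⟩)
    rw [Real.norm_eq_abs, abs_mul, abs_of_nonneg hfw,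
      abs_of_nonneg (Real.rpow_nonneg hu.le _)]
    calc fw d r * uu t r ^ b ≤ fw d r * m ^ b := by
          refine mul_le_mul_of_nonneg_left ?_ hfw
          rw [hm]; exact uu_rpow_le le_rfl ht hrm.1.le hrm.2 hb
    _ = m ^ b * fw d r := mul_comm _ _
  have hiGG : IntervalIntegrable (fun r => fw d r * uu t r ^ (cc d s p - 1)) volume (-1) 1 :=
    II_of_le_fw hd (meas_gG d s p t).aestronglyMeasurable
      (hbase (cc d s p - 1) (by linarith))
  have hiPd := intervalIntegrable_Pd (s := s) (p := p) hd hcc ht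
  have hig1 : IntervalIntegrable (fun r => g1 d s p t r) volume (-1) 1 := by
    have h := (hasDerivAt_F1 hd hcc ht)
    -- integrability from the identity below instead: derive directly
    refine II_of_le_fw hd (meas_g1 d s p t).aestronglyMeasurable
      (C := |cc d s p| * m ^ (cc d s p - 1) * 4) ?_
    intro r hrm
    have hfw := fw_nonneg d hrm.1.le hrm.2
    have hu : (0:ℝ) < uu t r := uu_pos ht (abs_le.2 ⟨hrm.1.le, hrm.2⟩)
    have hu1 : uu t r ^ (cc d s p - 1) ≤ m ^ (cc d s p - 1) := by
      rw [hm]; exact uu_rpow_le le_rfl ht hrm.1.le hrm.2 (by linarith)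
    have hun1 : (0:ℝ) ≤ uu t r ^ (cc d s p - 1) := Real.rpow_nonneg hu.le _
    have habs : |2 * t - 2 * r| ≤ 4 := by
      have h1 := abs_le.1 ht.le
      rw [abs_le]
      constructor <;> nlinarith [hrm.1.le, hrm.2]
    simp only [g1]
    rw [Real.norm_eq_abs, abs_mul, abs_of_nonneg hfw, abs_mul, abs_mul, abs_of_nonneg hun1]
    have hstep : |cc d s p| * uu t r ^ (cc d s p - 1) * |2 * t - 2 * r|
        ≤ |cc d s p| * m ^ (cc d s p - 1) * 4 := by
      apply mul_le_mul (mul_le_mul_of_nonneg_left hu1 (abs_nonneg _)) habs (abs_nonneg _)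
      positivity
    calc fw d r * (|cc d s p| * uu t r ^ (cc d s p - 1) * |2 * t - 2 * r|)
        ≤ fw d r * (|cc d s p| * m ^ (cc d s p - 1) * 4) :=
          mul_le_mul_of_nonneg_left hstep hfw
    _ = |cc d s p| * m ^ (cc d s p - 1) * 4 * fw d r := mul_comm _ _
  have hRHS : IntervalIntegrable
      (fun r => KK d s p * (fw d r * uu t r ^ (cc d s p - 1)) - (1 / t ^ 2) * Pd d s p t r)
      volume (-1) 1 := (hiGG.const_mul _).sub (hiPd.const_mul _)
  have hone : ∀ᵐ r : ℝ ∂volume, r ≠ (1:ℝ) := by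
    rw [ae_iff]
    have he : {r : ℝ | ¬ r ≠ 1} = {1} := by ext x; simp
    rw [he]
    exact Real.volume_singleton
  have hae : ∀ᵐ r : ℝ ∂volume, r ∈ Set.uIoc (-1:ℝ) 1 →
      g2 d s p t r + (((d:ℝ) - 1) / t) * g1 d s p t r
        = KK d s p * (fw d r * uu t r ^ (cc d s p - 1)) - (1 / t ^ 2) * Pd d s p t r := by
    filter_upwards [hone] with r hne hmem
    rw [Set.uIoc_of_le (by norm_num : (-1:ℝ) ≤ 1)] at hmem
    exact pointwise_identity hd ht0 ht1 ⟨hmem.1, lt_of_le_of_ne hmem.2 hne⟩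
  have hig2 : IntervalIntegrable (fun r => g2 d s p t r) volume (-1) 1 := by
    rw [intervalIntegrable_iff] at hRHS hig1 ⊢
    refine (hRHS.sub (hig1.const_mul (((d:ℝ) - 1) / t))).congr ?_
    refine (Filter.EventuallyEq.symm ?_)
    filter_upwards [ae_restrict_of_ae hae, self_mem_ae_restrict measurableSet_uIoc]
      with r h1 h2
    have := h1 h2
    simp only [Pi.sub_apply]
    linarith [this]
  -- now compute
  have step1 : F2 d s p t + (((d:ℝ) - 1) / t) * F1 d s p t
      = ∫ r in (-1:ℝ)..1, (g2 d s p t r + (((d:ℝ) - 1) / t) * g1 d s p t r) := by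
    rw [intervalIntegral.integral_add hig2 (hig1.const_mul _),
      intervalIntegral.integral_const_mul]
    rfl
  have step2 : (∫ r in (-1:ℝ)..1, (g2 d s p t r + (((d:ℝ) - 1) / t) * g1 d s p t r))
      = ∫ r in (-1:ℝ)..1,
          (KK d s p * (fw d r * uu t r ^ (cc d s p - 1)) - (1 / t ^ 2) * Pd d s p t r) :=
    intervalIntegral.integral_congr_ae hae
  have step3 : (∫ r in (-1:ℝ)..1,
        (KK d s p * (fw d r * uu t r ^ (cc d s p - 1)) - (1 / t ^ 2) * Pd d s p t r))
      = KK d s p * GG d s p t - (1 / t ^ 2) * ∫ r in (-1:ℝ)..1, Pd d s p t r := by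
    rw [intervalIntegral.integral_sub (hiGG.const_mul _) (hiPd.const_mul _),
      intervalIntegral.integral_const_mul, intervalIntegral.integral_const_mul]
    rfl
  rw [step1, step2, step3, integral_Pd hd hcc ht, mul_zero, sub_zero]

lemma intervalIntegrable_gG (hd : 2 ≤ d) (hcc : cc d s p < 0) {t : ℝ} (ht : |t| < 1) :
    IntervalIntegrable (fun r => fw d r * uu t r ^ (cc d s p - 1)) volume (-1) 1 := by
  set m : ℝ := (1 - |t|) ^ 2 with hm
  have hm0 : 0 < m := pow_pos (by linarith [abs_nonneg t]) 2
  refine II_of_le_fw hd (meas_gG d s p t).aestronglyMeasurable (C := m ^ (cc d s p - 1)) ?_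
  intro r hrm
  have hfw := fw_nonneg d hrm.1.le hrm.2
  have hu : (0:ℝ) < uu t r := uu_pos ht (abs_le.2 ⟨hrm.1.le, hrm.2⟩)
  rw [Real.norm_eq_abs, abs_mul, abs_of_nonneg hfw,
    abs_of_nonneg (Real.rpow_nonneg hu.le _)]
  calc fw d r * uu t r ^ (cc d s p - 1) ≤ fw d r * m ^ (cc d s p - 1) := by
        refine mul_le_mul_of_nonneg_left ?_ hfw
        rw [hm]; exact uu_rpow_le le_rfl ht hrm.1.le hrm.2 (by linarith)
  _ = m ^ (cc d s p - 1) * fw d r := mul_comm _ _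

lemma GG_pos (hd : 2 ≤ d) (hcc : cc d s p < 0) {t : ℝ} (ht : |t| < 1) :
    0 < GG d s p t := by
  refine intervalIntegral_pos_of_pos_on (intervalIntegrable_gG hd hcc ht) ?_ (by norm_num)
  intro r hr
  have hu : (0:ℝ) < uu t r := uu_pos ht (abs_le.2 ⟨hr.1.le, hr.2.le⟩)
  exact mul_pos (fw_pos d hr) (Real.rpow_pos_of_pos hu _)

lemma cc_lt (hd : 2 ≤ d) (hsp : 0 < s * p) : cc d s p < 0 := by
  have hdR : (2:ℝ) ≤ (d:ℝ) := by exact_mod_cast hd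
  unfold cc
  linarith

lemma KK_pos (hd : 2 ≤ d) (hsp : 0 < s * p) : 0 < KK d s p := by
  have hdR : (2:ℝ) ≤ (d:ℝ) := by exact_mod_cast hd
  have h1 : -2 * cc d s p = (d:ℝ) + s * p := by unfold cc; ring
  unfold KK
  rw [h1]
  have h2 : (d:ℝ) + s * p + 2 - (d:ℝ) = s * p + 2 := by ring
  rw [h2]
  exact mul_pos (by linarith) (by linarith)

lemma F1_pos (hd : 2 ≤ d) (hcc : cc d s p < 0) (hKK : 0 < KK d s p)
    {t : ℝ} (ht0 : 0 < t) (ht1 : t < 1) : 0 < F1 d s p t := by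
  obtain ⟨k, hk⟩ : ∃ k, d - 1 = k + 1 := ⟨d - 2, by omega⟩
  have hdk : ((k:ℝ) + 1) = (d:ℝ) - 1 := by
    have h : d = k + 2 := by omega
    subst h
    push_cast
    ring
  set W : ℝ → ℝ := fun x => x ^ (k + 1) * F1 d s p x with hW
  have hWd : ∀ x ∈ Ioo (0:ℝ) 1, HasDerivAt W
      (((k:ℝ) + 1) * x ^ k * F1 d s p x + x ^ (k + 1) * F2 d s p x) x := by
    intro x hx
    have habs : |x| < 1 := abs_lt.2 ⟨by linarith [hx.1], hx.2⟩
    have h := (hasDerivAt_pow (k + 1) x).mul (hasDerivAt_F1 hd hcc habs)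
    refine h.congr_deriv ?_
    push_cast
    ring
  have hWc : ContinuousOn W (Ico (0:ℝ) 1) := by
    intro x hx
    have habs : |x| < 1 := abs_lt.2 ⟨by linarith [hx.1], hx.2⟩
    exact (((hasDerivAt_pow (k + 1) x).mul
      (hasDerivAt_F1 hd hcc habs)).continuousAt).continuousWithinAt
  have hmono : StrictMonoOn W (Ico (0:ℝ) 1) := by
    refine strictMonoOn_of_deriv_pos (convex_Ico 0 1) hWc ?_
    intro x hx
    rw [interior_Ico] at hx
    rw [(hWd x hx).deriv]
    have hode := ode_identity hd hcc hx.1 hx.2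
    have hxne : x ≠ 0 := hx.1.ne'
    have h2 : x * F2 d s p x + ((d:ℝ) - 1) * F1 d s p x = x * (KK d s p * GG d s p x) := by
      calc x * F2 d s p x + ((d:ℝ) - 1) * F1 d s p x
          = x * (F2 d s p x + (((d:ℝ) - 1) / x) * F1 d s p x) := by field_simp
      _ = x * (KK d s p * GG d s p x) := by rw [hode]
    have he : ((k:ℝ) + 1) * x ^ k * F1 d s p x + x ^ (k + 1) * F2 d s p x
        = x ^ k * (x * (KK d s p * GG d s p x)) := by
      rw [← h2, hdk, pow_succ]
      ring
    rw [he]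
    have hGG := GG_pos hd hcc (abs_lt.2 ⟨by linarith [hx.1], hx.2⟩)
    have hxp := hx.1
    positivity
  have hW0 : W 0 = 0 := by
    simp [hW, zero_pow (Nat.succ_ne_zero k)]
  have hWt : 0 < W t := by
    have h := hmono (left_mem_Ico.2 (by norm_num)) ⟨ht0.le, ht1⟩ ht0
    rwa [hW0] at h
  rw [hW] at hWt
  simp only at hWt
  nlinarith [pow_pos ht0 (k + 1)]

end ode

end PhiAux

theorem Phi_strictMonoOn (d : ℕ) (hd : 2 ≤ d) (s p : ℝ)
    (hs : 0 < s) (hs1 : s < 1) (hp : 1 ≤ p) :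
    StrictMonoOn (Phi d s p) (Ico (0 : ℝ) 1) := by
  have hsp : 0 < s * p := mul_pos hs (by linarith)
  have hcc := PhiAux.cc_lt hd hsp
  have hKK := PhiAux.KK_pos hd hsp
  have hdR : (2:ℝ) ≤ (d:ℝ) := by exact_mod_cast hd
  have hC : 0 < 2 * Real.pi ^ (((d : ℝ) - 1) / 2) / Real.Gamma (((d : ℝ) - 1) / 2) := by
    apply div_pos
    · have hpi := Real.pi_pos
      positivity
    · exact Real.Gamma_pos_of_pos (by linarith)
  have hFF : StrictMonoOn (PhiAux.FF d s p) (Ico (0:ℝ) 1) := by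
    refine strictMonoOn_of_deriv_pos (convex_Ico 0 1) ?_ ?_
    · intro x hx
      have habs : |x| < 1 := abs_lt.2 ⟨by linarith [hx.1], hx.2⟩
      exact (PhiAux.hasDerivAt_FF hd hcc habs).continuousAt.continuousWithinAt
    · intro x hx
      rw [interior_Ico] at hx
      have habs : |x| < 1 := abs_lt.2 ⟨by linarith [hx.1], hx.2⟩
      rw [(PhiAux.hasDerivAt_FF hd hcc habs).deriv]
      exact PhiAux.F1_pos hd hcc hKK hx.1 hx.2
  have hPhi : ∀ t : ℝ, Phi d s p t
      = (2 * Real.pi ^ (((d : ℝ) - 1) / 2) / Real.Gamma (((d : ℝ) - 1) / 2))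
        * PhiAux.FF d s p t := fun t => rfl
  intro a ha b hb hab
  rw [hPhi a, hPhi b]
  exact mul_lt_mul_of_pos_left (hFF ha hb hab) hC
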